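/- For every integer k ≥ 0, the graph Q_k has exactly 3·2^k coloring-partitions; equivalently, Q_k has exactly 72·2^k proper 4-colorings f : V(Q_k) → Fin 4. -/

import Mathlib

/-- A proper 4-coloring of a simple graph `G`. -/
def IsProperColoring {V : Type*} (G : SimpleGraph V) (f : V → Fin 4) : Prop :=
  ∀ ⦃u v : V⦄, G.Adj u v → f u ≠ f v

/-- `kempeCount G f a b` is the number of `ab`-Kempe chains of `f`, i.e. the number of
connected components of the subgraph of `G` induced on `f⁻¹({a, b})`. -/
noncomputable def kempeCount {V : Type*} (G : SimpleGraph V) (f : V → Fin 4)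
    (a b : Fin 4) : ℕ :=
  Nat.card ((G.induce {v | f v = a ∨ f v = b}).ConnectedComponent)

/-- Tutte's quantity `J_a(f) = p(a,b) + p(a,c) + p(a,d) - p(b,c) - p(b,d) - p(c,d)`,
where `{b, c, d} = Fin 4 \ {a}`. -/
noncomputable def Jcol {V : Type*} (G : SimpleGraph V) (f : V → Fin 4) (a : Fin 4) : ℤ :=
  (∑ x ∈ Finset.univ.erase a, (kempeCount G f a x : ℤ)) -
    ∑ x ∈ Finset.univ.erase a,
      ∑ y ∈ (Finset.univ.erase a).filter (fun y => x < y), (kempeCount G f x y : ℤ)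

/-- The coloring-partition of `f`: the set of its nonempty color classes. -/
def colPart {V : Type*} (f : V → Fin 4) : Set (Set V) :=
  {A | A.Nonempty ∧ ∃ c, A = f ⁻¹' {c}}

/-- `P` is a coloring-partition of `G` if it is the coloring-partition of some proper
4-coloring of `G`. -/
def IsColoringPartition {V : Type*} (G : SimpleGraph V) (P : Set (Set V)) : Prop :=
  ∃ f, IsProperColoring G f ∧ P = colPart f

/-- The set of all color classes of proper 4-colorings of `G`. -/
def colorClasses {V : Type*} (G : SimpleGraph V) : Set (Set V) :=
  {A | A.Nonempty ∧ ∃ f c, IsProperColoring G f ∧ A = f ⁻¹' {c}}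

/-- The 4-coloring complex `B(G)`: vertices are color classes of proper 4-colorings of `G`,
two distinct classes being adjacent iff they are color classes of a common proper
4-coloring. -/
def colorComplex {V : Type*} (G : SimpleGraph V) : SimpleGraph (colorClasses G) :=
  SimpleGraph.fromRel (fun A B => ∃ f, IsProperColoring G f ∧
    (∃ c, (A : Set V) = f ⁻¹' {c}) ∧ (∃ c, (B : Set V) = f ⁻¹' {c}))

/-- Two proper 4-colorings are adjacent if they have a common (nonempty) color class. -/
def ColAdj {V : Type*} (G : SimpleGraph V) (f g : V → Fin 4) : Prop :=
  IsProperColoring G f ∧ IsProperColoring G g ∧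
    ∃ c c', (f ⁻¹' {c}).Nonempty ∧ f ⁻¹' {c} = g ⁻¹' {c'}

/-- Generating relation for the triangulation `Q_k`.  The vertex `(i, 0)` is `a_i`,
`(i, 1)` is `b_i`, `(i, 2)` is `c_i` and `(i, 3)` is `d_i`.  Edges: the 4-cycles
`a_i b_i c_i d_i`, connecting edges between consecutive cycles, and the chords
`a_0 c_0` and `a_{k+1} c_{k+1}`. -/
def qkRel (k : ℕ) (u v : Fin (k + 2) × Fin 4) : Prop :=
  (u.1 = v.1 ∧ v.2 = u.2 + 1) ∨
  ((v.1 : ℕ) = (u.1 : ℕ) + 1 ∧ (v.2 = u.2 ∨ v.2 = u.2 + 1)) ∨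
  ((u.1 : ℕ) = 0 ∧ (v.1 : ℕ) = 0 ∧ u.2 = 0 ∧ v.2 = 2) ∨
  ((u.1 : ℕ) = k + 1 ∧ (v.1 : ℕ) = k + 1 ∧ u.2 = 0 ∧ v.2 = 2)

/-- The triangulation `Q_k`. -/
def Qk (k : ℕ) : SimpleGraph (Fin (k + 2) × Fin 4) := SimpleGraph.fromRel (qkRel k)


/-! ### Auxiliary machinery for the count -/

section Aux

/-- The colors of one layer `(a_i, b_i, c_i, d_i)`. -/
abbrev St := Fin 4 × Fin 4 × Fin 4 × Fin 4

/-- Proper coloring of the 4-cycle in one layer. -/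
def cyc (s : St) : Prop :=
  s.1 ≠ s.2.1 ∧ s.2.1 ≠ s.2.2.1 ∧ s.2.2.1 ≠ s.2.2.2 ∧ s.2.2.2 ≠ s.1

/-- Chord condition `a ≠ c`. -/
def chrd (s : St) : Prop := s.1 ≠ s.2.2.1

/-- Compatibility of consecutive layer colorings. -/
def cpt (s t : St) : Prop :=
  t.1 ≠ s.1 ∧ t.1 ≠ s.2.2.2 ∧ t.2.1 ≠ s.2.1 ∧ t.2.1 ≠ s.1 ∧
  t.2.2.1 ≠ s.2.2.1 ∧ t.2.2.1 ≠ s.2.1 ∧ t.2.2.2 ≠ s.2.2.2 ∧ t.2.2.2 ≠ s.2.2.1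

instance : DecidablePred cyc := fun s => by unfold cyc; infer_instance
instance : DecidablePred chrd := fun s => by unfold chrd; infer_instance
instance (s : St) : DecidablePred (cpt s) := fun t => by unfold cpt; infer_instance

/-- Eigenvector of the transfer operator. -/
def psi (t : St) : ℕ :=
  if cyc t then (if t.1 ≠ t.2.2.1 then 1 else 0) + (if t.2.1 ≠ t.2.2.2 then 1 else 0) else 0

/-- `E n t` counts sequences of `n+1` layer colorings starting at `t`, all cycle-proper,
consecutively compatible, ending with a chord-proper layer. -/
def E : ℕ → St → ℕ
  | 0, t => if cyc t ∧ chrd t then 1 else 0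
  | n+1, t => if cyc t then ∑ s : St, (if cpt t s then E n s else 0) else 0

set_option maxRecDepth 100000 in
set_option maxHeartbeats 4000000 in
lemma D1 : ∀ t : St,
    (if cyc t then ∑ s : St, (if cpt t s then (if cyc s ∧ chrd s then 1 else 0) else 0) else 0)
      = psi t := by decide

set_option maxRecDepth 100000 in
set_option maxHeartbeats 4000000 in
lemma D2 : ∀ t : St,
    (if cyc t then ∑ s : St, (if cpt t s then psi s else 0) else 0) = 2 * psi t := by decide

set_option maxRecDepth 100000 in
set_option maxHeartbeats 4000000 in
lemma D3 : (∑ s : St, if chrd s then psi s else 0) = 72 := by decide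

lemma E_one (t : St) : E 1 t = psi t := by
  rw [← D1 t]; simp only [E]

lemma E_succ (n : ℕ) (t : St) : E (n+1) t = 2 ^ n * psi t := by
  induction n generalizing t with
  | zero => simpa using E_one t
  | succ n ih =>
    show (if cyc t then ∑ s : St, (if cpt t s then E (n+1) s else 0) else 0) = _
    have hcong : ∀ s : St,
        (if cpt t s then E (n+1) s else 0) = 2 ^ n * (if cpt t s then psi s else 0) := by
      intro s; rw [ih]; split <;> simp
    rw [Finset.sum_congr rfl (fun s _ => hcong s), ← Finset.mul_sum]
    have hD := D2 t
    rcases Decidable.em (cyc t) with h | h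
    · rw [if_pos h] at hD ⊢
      rw [hD]; ring
    · rw [if_neg h] at hD ⊢
      have hz : psi t = 0 := by omega
      simp [hz]

/-- Sequence condition with fixed head. -/
def Cond (n : ℕ) (t : St) (g : Fin (n+1) → St) : Prop :=
  g 0 = t ∧ (∀ i, cyc (g i)) ∧ (∀ i : Fin n, cpt (g i.castSucc) (g i.succ)) ∧
    chrd (g (Fin.last n))

/-- The full sequence condition, equivalent to properness of the corresponding coloring. -/
def Full (n : ℕ) (g : Fin (n+1) → St) : Prop :=
  chrd (g 0) ∧ (∀ i, cyc (g i)) ∧ (∀ i : Fin n, cpt (g i.castSucc) (g i.succ)) ∧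
    chrd (g (Fin.last n))

instance (n t) : DecidablePred (Cond n t) := fun g => by unfold Cond; infer_instance
instance (n : ℕ) : DecidablePred (Full n) := fun g => by unfold Full; infer_instance

open Finset in
lemma card_cond (n : ℕ) (t : St) :
    (Finset.univ.filter (Cond n t)).card = E n t := by
  induction n generalizing t with
  | zero =>
    rcases Decidable.em (cyc t ∧ chrd t) with h | h
    · have hset : Finset.univ.filter (Cond 0 t) = {fun _ : Fin 1 => t} := by
        ext g
        simp only [mem_filter, mem_univ, true_and, mem_singleton, Cond]
        constructor
        · rintro ⟨h0, -, -, -⟩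
          funext i
          have : i = 0 := by omega
          rw [this, h0]
        · rintro rfl
          exact ⟨rfl, fun _ => h.1, fun i => i.elim0, h.2⟩
      rw [hset]
      simp [E, h]
    · have hset : Finset.univ.filter (Cond 0 t) = ∅ := by
        ext g
        simp only [mem_filter, mem_univ, true_and, notMem_empty, iff_false, Cond]
        rintro ⟨h0, hc, -, hch⟩
        exact h ⟨h0 ▸ hc 0, h0 ▸ hch⟩
      rw [hset]
      simp [E, h]
  | succ n ih =>
    have hfib := Finset.card_eq_sum_card_fiberwise
      (f := fun g : Fin (n+2) → St => g 1) (s := Finset.univ.filter (Cond (n+1) t))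
      (t := Finset.univ) (fun x _ => mem_univ _)
    rw [hfib]
    have e1 : (1 : Fin (n+2)) = Fin.succ (0 : Fin (n+1)) := by
      rw [Fin.succ_zero_eq_one']
    have key : ∀ s : St,
        ((Finset.univ.filter (Cond (n+1) t)).filter (fun g => g 1 = s)).card
          = if cyc t ∧ cpt t s then E n s else 0 := by
      intro s
      rw [Finset.filter_filter]
      rcases Decidable.em (cyc t ∧ cpt t s) with h | h
      · rw [if_pos h, ← ih s]
        apply Finset.card_nbij' (fun g => Fin.tail g) (fun g => Fin.cons t g)
        · -- tail lands in target
          intro g hg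
          change g ∈ Finset.univ.filter (fun a => Cond (n+1) t a ∧ a 1 = s) at hg
          rw [Finset.mem_filter] at hg
          simp only [Finset.mem_coe, mem_filter, mem_univ, true_and, Cond] at hg ⊢
          obtain ⟨⟨h0, hcy, hch, hlast⟩, h1⟩ := hg
          refine ⟨?_, fun i => hcy i.succ, fun i => ?_, ?_⟩
          · show g (Fin.succ 0) = s
            rw [← e1]; exact h1
          · have := hch i.succ
            rwa [← Fin.succ_castSucc] at this
          · rwa [← Fin.succ_last] at hlast
        · -- cons lands in source
          intro g hg
          change (Fin.cons t g : Fin (n+2) → St) ∈ Finset.univ.filter (fun a => Cond (n+1) t a ∧ a 1 = s)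
          rw [Finset.mem_filter]
          simp only [Finset.mem_coe, mem_filter, mem_univ, true_and, Cond] at hg ⊢
          obtain ⟨h0, hcy, hch, hlast⟩ := hg
          have hc1 : (Fin.cons t g : Fin (n+2) → St) 1 = s := by
            rw [e1, Fin.cons_succ, h0]
          refine ⟨⟨rfl, ?_, ?_, ?_⟩, hc1⟩
          · intro i
            refine Fin.cases ?_ ?_ i
            · exact h.1
            · intro j; rw [Fin.cons_succ]; exact hcy j
          · intro i
            refine Fin.cases ?_ ?_ i
            · rw [Fin.castSucc_zero', Fin.cons_zero]
              have : (Fin.cons t g : Fin (n+2) → St) (Fin.succ 0) = s := by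
                rw [← e1]; exact hc1
              rw [this]
              exact h.2
            · intro j
              rw [← Fin.succ_castSucc, Fin.cons_succ, Fin.cons_succ]
              exact hch j
          · rw [← Fin.succ_last, Fin.cons_succ]
            exact hlast
        · intro g hg
          change g ∈ Finset.univ.filter (fun a => Cond (n+1) t a ∧ a 1 = s) at hg
          rw [Finset.mem_filter] at hg
          simp only [Finset.mem_coe, mem_filter, mem_univ, true_and, Cond] at hg
          beta_reduce
          rw [← hg.1.1, Fin.cons_self_tail]
        · intro g _
          funext j
          simp [Fin.tail]
      · rw [if_neg h]
        rw [Finset.card_eq_zero, Finset.filter_eq_empty_iff]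
        intro g _
        rintro ⟨⟨h0, hcy, hch, -⟩, h1⟩
        refine h ⟨h0 ▸ hcy 0, ?_⟩
        have hcc := hch 0
        rw [Fin.castSucc_zero', Fin.succ_zero_eq_one', h0, h1] at hcc
        exact hcc
    rw [Finset.sum_congr rfl (fun s _ => key s)]
    have hE : E (n+1) t = if cyc t then ∑ s : St, (if cpt t s then E n s else 0) else 0 := by
      simp only [E]
    rw [hE]
    rcases Decidable.em (cyc t) with hc | hc
    · simp [hc]
    · simp [hc]

open Finset in
lemma card_full (n : ℕ) :
    (Finset.univ.filter (Full n)).card = ∑ s : St, if chrd s then E n s else 0 := by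
  have hfib := Finset.card_eq_sum_card_fiberwise
    (f := fun g : Fin (n+1) → St => g 0) (s := Finset.univ.filter (Full n))
    (t := Finset.univ) (fun x _ => mem_univ _)
  rw [hfib]
  refine Finset.sum_congr rfl (fun s _ => ?_)
  rw [Finset.filter_filter]
  rcases Decidable.em (chrd s) with h | h
  · rw [if_pos h, ← card_cond n s]
    congr 1
    apply Finset.filter_congr
    intro g _
    simp only [Full, Cond]
    constructor
    · rintro ⟨⟨hc0, hcy, hch, hl⟩, h0⟩
      exact ⟨h0, hcy, hch, hl⟩
    · rintro ⟨h0, hcy, hch, hl⟩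
      exact ⟨⟨h0 ▸ h, hcy, hch, hl⟩, h0⟩
  · rw [if_neg h, Finset.card_eq_zero, Finset.filter_eq_empty_iff]
    intro g _
    rintro ⟨⟨hc0, -, -, -⟩, h0⟩
    exact h (h0 ▸ hc0)

open Finset in
lemma card_full_eq (k : ℕ) :
    (Finset.univ.filter (Full (k+1))).card = 72 * 2 ^ k := by
  rw [card_full]
  have hcong : ∀ s : St,
      (if chrd s then E (k+1) s else 0) = 2 ^ k * (if chrd s then psi s else 0) := by
    intro s
    rw [E_succ]
    split <;> ring
  rw [Finset.sum_congr rfl (fun s _ => hcong s), ← Finset.mul_sum, D3]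
  ring

/-- Read off color `j` of a layer state. -/
def pget (s : St) : Fin 4 → Fin 4 := fun j =>
  if j = 0 then s.1 else if j = 1 then s.2.1 else if j = 2 then s.2.2.1 else s.2.2.2

/-- Colorings of `Q_k` correspond to sequences of layer states. -/
def layEquiv (k : ℕ) : (Fin (k+2) × Fin 4 → Fin 4) ≃ (Fin (k+2) → St) where
  toFun f i := (f (i,0), f (i,1), f (i,2), f (i,3))
  invFun g p := pget (g p.1) p.2
  left_inv f := by
    funext p
    obtain ⟨i, j⟩ := p
    fin_cases j <;> simp [pget]
  right_inv g := by
    funext i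
    simp [pget]

lemma qkRel_ne {k : ℕ} {u v : Fin (k+2) × Fin 4} (h : qkRel k u v) : u ≠ v := by
  rcases h with ⟨h1, h2⟩ | ⟨h1, h2⟩ | ⟨h1, h2, h3, h4⟩ | ⟨h1, h2, h3, h4⟩
  · intro he
    rw [he] at h2
    simp only [Fin.ext_iff, Fin.add_def] at h2
    omega
  · intro he
    rw [he] at h1
    omega
  · intro he
    rw [he, h4] at h3
    exact absurd h3 (by decide)
  · intro he
    rw [he, h4] at h3
    exact absurd h3 (by decide)

lemma proper_iff_rel (k : ℕ) (f : Fin (k+2) × Fin 4 → Fin 4) :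
    IsProperColoring (Qk k) f ↔ ∀ u v, qkRel k u v → f u ≠ f v := by
  constructor
  · intro hp u v hr
    exact hp ((SimpleGraph.fromRel_adj _ u v).mpr ⟨qkRel_ne hr, Or.inl hr⟩)
  · intro h u v hadj
    rcases ((SimpleGraph.fromRel_adj _ u v).mp hadj).2 with hr | hr
    · exact h u v hr
    · exact (h v u hr).symm

lemma rel_iff_full (k : ℕ) (f : Fin (k+2) × Fin 4 → Fin 4) :
    (∀ u v, qkRel k u v → f u ≠ f v) ↔ Full (k+1) (layEquiv k f) := by
  constructor
  · intro h
    refine ⟨?_, ?_, ?_, ?_⟩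
    · exact h ((0 : Fin (k+2)), 0) ((0 : Fin (k+2)), 2)
        (Or.inr (Or.inr (Or.inl ⟨by simp, by simp, rfl, rfl⟩)))
    · intro i
      exact ⟨h (i,0) (i,1) (Or.inl ⟨rfl, rfl⟩),
             h (i,1) (i,2) (Or.inl ⟨rfl, rfl⟩),
             h (i,2) (i,3) (Or.inl ⟨rfl, rfl⟩),
             h (i,3) (i,0) (Or.inl ⟨rfl, rfl⟩)⟩
    · intro i
      have hv : ((i.succ : Fin (k+2)) : ℕ) = ((i.castSucc : Fin (k+2)) : ℕ) + 1 := by simp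
      exact ⟨(h (i.castSucc, 0) (i.succ, 0) (Or.inr (Or.inl ⟨hv, Or.inl rfl⟩))).symm,
             (h (i.castSucc, 3) (i.succ, 0) (Or.inr (Or.inl ⟨hv, Or.inr rfl⟩))).symm,
             (h (i.castSucc, 1) (i.succ, 1) (Or.inr (Or.inl ⟨hv, Or.inl rfl⟩))).symm,
             (h (i.castSucc, 0) (i.succ, 1) (Or.inr (Or.inl ⟨hv, Or.inr rfl⟩))).symm,
             (h (i.castSucc, 2) (i.succ, 2) (Or.inr (Or.inl ⟨hv, Or.inl rfl⟩))).symm,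
             (h (i.castSucc, 1) (i.succ, 2) (Or.inr (Or.inl ⟨hv, Or.inr rfl⟩))).symm,
             (h (i.castSucc, 3) (i.succ, 3) (Or.inr (Or.inl ⟨hv, Or.inl rfl⟩))).symm,
             (h (i.castSucc, 2) (i.succ, 3) (Or.inr (Or.inl ⟨hv, Or.inr rfl⟩))).symm⟩
    · exact h (Fin.last (k+1), 0) (Fin.last (k+1), 2)
        (Or.inr (Or.inr (Or.inr ⟨by simp, by simp, rfl, rfl⟩)))
  · rintro ⟨h0, hcy, hch, hl⟩ ⟨i, j⟩ ⟨i', j'⟩ hr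
    rcases hr with ⟨h1, h2⟩ | ⟨h1, h2⟩ | ⟨h1, h2, h3, h4⟩ | ⟨h1, h2, h3, h4⟩
    · simp only at h1 h2
      subst h1; subst h2
      have hc := hcy i
      fin_cases j
      · exact hc.1
      · exact hc.2.1
      · exact hc.2.2.1
      · exact hc.2.2.2
    · simp only at h1 h2
      have hlt : (i : ℕ) < k + 1 := by have := i'.isLt; omega
      have e1 : (Fin.castSucc (⟨(i : ℕ), hlt⟩ : Fin (k+1))) = i := by
        apply Fin.ext; simp
      have e2 : (Fin.succ (⟨(i : ℕ), hlt⟩ : Fin (k+1))) = i' := by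
        apply Fin.ext; simp [h1]
      have hc := hch ⟨(i : ℕ), hlt⟩
      rw [e1, e2] at hc
      rcases h2 with h2 | h2 <;> rw [h2]
      · fin_cases j
        · exact hc.1.symm
        · exact hc.2.2.1.symm
        · exact hc.2.2.2.2.1.symm
        · exact hc.2.2.2.2.2.2.1.symm
      · fin_cases j
        · exact hc.2.2.2.1.symm
        · exact hc.2.2.2.2.2.1.symm
        · exact hc.2.2.2.2.2.2.2.symm
        · exact hc.2.1.symm
    · simp only at h1 h2 h3 h4
      have e1 : i = 0 := by apply Fin.ext; simp [h1]
      have e2 : i' = 0 := by apply Fin.ext; simp [h2]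
      subst h3; subst h4
      rw [e1, e2]
      exact h0
    · simp only at h1 h2 h3 h4
      have e1 : i = Fin.last (k+1) := by apply Fin.ext; simp [h1]
      have e2 : i' = Fin.last (k+1) := by apply Fin.ext; simp [h2]
      subst h3; subst h4
      rw [e1, e2]
      exact hl

lemma count_proper (k : ℕ) :
    Nat.card {f : Fin (k + 2) × Fin 4 → Fin 4 // IsProperColoring (Qk k) f} = 72 * 2 ^ k := by
  have e : {f : Fin (k+2) × Fin 4 → Fin 4 // IsProperColoring (Qk k) f}
      ≃ {g : Fin (k+2) → St // Full (k+1) g} :=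
    Equiv.subtypeEquiv (layEquiv k) (fun f => by rw [proper_iff_rel, rel_iff_full])
  rw [Nat.card_congr e, Nat.card_eq_fintype_card, Fintype.card_subtype, card_full_eq]

lemma colPart_subset {V : Type*} {f g : V → Fin 4}
    (h : ∀ u v, f u = f v ↔ g u = g v) : colPart f ⊆ colPart g := by
  rintro A ⟨⟨u, hu⟩, c, rfl⟩
  have hu' : f u = c := hu
  refine ⟨⟨u, hu⟩, g u, ?_⟩
  ext v
  simp only [Set.mem_preimage, Set.mem_singleton_iff]
  rw [← hu']
  constructor
  · intro hv
    exact (h v u).mp hv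
  · intro hv
    exact (h v u).mpr hv

lemma colPart_eq_iff {V : Type*} (f g : V → Fin 4) :
    colPart f = colPart g ↔ ∀ u v, (f u = f v ↔ g u = g v) := by
  constructor
  · intro h u v
    have hu : (f ⁻¹' {f u}) ∈ colPart f := ⟨⟨u, rfl⟩, f u, rfl⟩
    rw [h] at hu
    obtain ⟨-, c, hc⟩ := hu
    have hgu : g u = c := by
      have : u ∈ f ⁻¹' {f u} := rfl
      rw [hc] at this
      exact this
    constructor
    · intro hfv
      have : v ∈ f ⁻¹' {f u} := hfv.symm
      rw [hc] at this
      have hgv : g v = c := this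
      rw [hgu, hgv]
    · intro hgv
      have : v ∈ g ⁻¹' {c} := show g v = c by rw [← hgv, hgu]
      rw [← hc] at this
      have : f v = f u := this
      exact this.symm
  · intro h
    apply Set.Subset.antisymm
    · exact colPart_subset h
    · exact colPart_subset (fun u v => (h u v).symm)

lemma ker_fiber_card {V : Type*} [Fintype V] [DecidableEq V] (f0 : V → Fin 4) :
    (Finset.univ.filter (fun g : V → Fin 4 => ∀ u v, g u = g v ↔ f0 u = f0 v)).card
      = Nat.descFactorial 4 (Finset.univ.image f0).card := by
  classical
  set D : Finset (Fin 4) := Finset.univ.image f0 with hD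
  have hwit : ∀ c : {x // x ∈ D}, ∃ a, f0 a = (c : Fin 4) := by
    rintro ⟨c, hc⟩
    obtain ⟨a, -, ha⟩ := Finset.mem_image.mp hc
    exact ⟨a, ha⟩
  choose w hw using hwit
  have e : {g : V → Fin 4 // ∀ u v, g u = g v ↔ f0 u = f0 v} ≃ ({x // x ∈ D} ↪ Fin 4) :=
    { toFun := fun gp => ⟨fun c => gp.1 (w c), fun c c' hcc => Subtype.ext (by
        have := (gp.2 (w c) (w c')).mp hcc
        rwa [hw c, hw c'] at this)⟩
      invFun := fun h => ⟨fun v => h ⟨f0 v, Finset.mem_image_of_mem f0 (Finset.mem_univ v)⟩,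
        fun u v => by
          constructor
          · intro he
            exact congrArg Subtype.val (h.injective he)
          · intro he
            exact congrArg h (Subtype.ext he)⟩
      left_inv := fun gp => Subtype.ext (funext fun v =>
        (gp.2 (w ⟨f0 v, Finset.mem_image_of_mem f0 (Finset.mem_univ v)⟩) v).mpr
          (hw ⟨f0 v, Finset.mem_image_of_mem f0 (Finset.mem_univ v)⟩))
      right_inv := fun h => Function.Embedding.ext fun c => congrArg h (Subtype.ext (hw c)) }
  have hc := Fintype.card_congr e
  rw [Fintype.card_subtype] at hc
  rw [hc, Fintype.card_embedding_eq, Fintype.card_coe, Fintype.card_fin]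

end Aux

/-- `Q_k` has exactly `3·2^k` coloring-partitions, equivalently exactly `72·2^k` proper
4-colorings. -/
theorem Qk_coloring_count (k : ℕ) :
    {P : Set (Set (Fin (k + 2) × Fin 4)) | IsColoringPartition (Qk k) P}.ncard
        = 3 * 2 ^ k ∧
    Nat.card {f : Fin (k + 2) × Fin 4 → Fin 4 // IsProperColoring (Qk k) f}
        = 72 * 2 ^ k := by
  classical
  have hcount := count_proper k
  refine ⟨?_, hcount⟩
  set F : Finset (Fin (k+2) × Fin 4 → Fin 4) :=
    Finset.univ.filter (fun f => IsProperColoring (Qk k) f) with hF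
  have hFcard : F.card = 72 * 2 ^ k := by
    rw [← hcount, Nat.card_eq_fintype_card, Fintype.card_subtype]
  set I : Finset (Set (Set (Fin (k+2) × Fin 4))) := F.image colPart with hI
  have hset : {P : Set (Set (Fin (k + 2) × Fin 4)) | IsColoringPartition (Qk k) P} = ↑I := by
    ext P
    simp only [Set.mem_setOf_eq, IsColoringPartition, hI, Finset.coe_image, Set.mem_image,
      Finset.mem_coe, hF, Finset.mem_filter, Finset.mem_univ, true_and]
    constructor
    · rintro ⟨f, hf, rfl⟩
      exact ⟨f, hf, rfl⟩
    · rintro ⟨f, hf, rfl⟩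
      exact ⟨f, hf, rfl⟩
  rw [hset, Set.ncard_coe_finset]
  have hsum := Finset.card_eq_sum_card_image colPart F
  have hfib : ∀ P ∈ I, (F.filter fun f => colPart f = P).card = 24 := by
    intro P hP
    obtain ⟨f0, hf0F, hf0P⟩ := Finset.mem_image.mp hP
    have hf0 : IsProperColoring (Qk k) f0 := (Finset.mem_filter.mp hf0F).2
    have hrel := (proper_iff_rel k f0).mp hf0
    have t1 : f0 (0, 0) ≠ f0 (0, 1) := hrel _ _ (Or.inl ⟨rfl, rfl⟩)
    have t2 : f0 (0, 1) ≠ f0 (0, 2) := hrel _ _ (Or.inl ⟨rfl, rfl⟩)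
    have t3 : f0 (0, 0) ≠ f0 (0, 2) :=
      hrel _ _ (Or.inr (Or.inr (Or.inl ⟨by simp, by simp, rfl, rfl⟩)))
    have hfilter : F.filter (fun f => colPart f = P)
        = Finset.univ.filter (fun g => ∀ u v, g u = g v ↔ f0 u = f0 v) := by
      ext g
      simp only [Finset.mem_filter, hF, Finset.mem_univ, true_and]
      constructor
      · rintro ⟨hgF, hgP⟩
        have hcp : colPart g = colPart f0 := by rw [hgP, hf0P]
        exact (colPart_eq_iff g f0).mp hcp
      · intro hker
        have hgproper : IsProperColoring (Qk k) g := fun u v hadj he =>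
          hf0 hadj ((hker u v).mp he)
        have hcp : colPart g = colPart f0 := (colPart_eq_iff g f0).mpr hker
        exact ⟨hgproper, hcp.trans hf0P⟩
    rw [hfilter, ker_fiber_card]
    have hsub : ({f0 (0,0), f0 (0,1), f0 (0,2)} : Finset (Fin 4)) ⊆ Finset.univ.image f0 := by
      intro x hx
      simp only [Finset.mem_insert, Finset.mem_singleton] at hx
      rcases hx with rfl | rfl | rfl <;> exact Finset.mem_image_of_mem f0 (Finset.mem_univ _)
    have h3 : 3 ≤ (Finset.univ.image f0).card := by
      have htr : ({f0 (0,0), f0 (0,1), f0 (0,2)} : Finset (Fin 4)).card = 3 := by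
        rw [Finset.card_insert_of_notMem (by
            simp only [Finset.mem_insert, Finset.mem_singleton]
            push_neg
            exact ⟨t1, t3⟩),
          Finset.card_insert_of_notMem (by
            simp only [Finset.mem_singleton]
            exact t2), Finset.card_singleton]
      calc 3 = _ := htr.symm
        _ ≤ _ := Finset.card_le_card hsub
    have h4 : (Finset.univ.image f0).card ≤ 4 := by
      have := Finset.card_le_card (Finset.subset_univ (Finset.univ.image f0))
      simpa using this
    have h34 : (Finset.univ.image f0).card = 3 ∨ (Finset.univ.image f0).card = 4 := by omega
    rcases h34 with h | h <;> rw [h] <;> rfl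
  rw [Finset.sum_congr rfl hfib, Finset.sum_const, smul_eq_mul, hFcard] at hsum
  omega
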